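/- arXiv:1704.00777 — 3 statements merged into one kernel-verified Lean document; each statement's English description precedes it below -/
import Mathlib

section
/- For every integer n ≥ 1 and every predicate D : {0,1,...,n} → {−1,1} with M = deg₂(D), the 2^n × 2^n sign matrix F indexed by x, y ∈ {0,1}^n with entries F(x,y) = D(|x ⊕ y|) has sign-rank rk±(F) ≤ 4 · Σ_{k=0}^{M} C(n,k); in particular rk±(F) ≤ 4 n^M for all sufficiently large n. (This is the upper bound of the main theorem: the unbounded-error communication complexity of f^⊕_D is at most O(deg₂(D) · log n).) -/
/-- Hamming weight of a Boolean vector. -/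
def hamW {n : ℕ} (x : Fin n → Bool) : ℕ := (Finset.univ.filter (fun i => x i)).card

/-- Bitwise XOR of Boolean vectors. -/
def bxor {n : ℕ} (x y : Fin n → Bool) : Fin n → Bool := fun i => xor (x i) (y i)

/-- Bitwise AND of Boolean vectors. -/
def band {n : ℕ} (x y : Fin n → Bool) : Fin n → Bool := fun i => x i && y i

/-- Sign-rank of a real sign matrix `F`: the least rank of a real matrix `A`
of the same dimensions all of whose entries are nonzero and have the same sign
as the corresponding entry of `F`. -/
noncomputable def signRank {X Y : Type} [Fintype X] [Fintype Y]
    (F : Matrix X Y ℝ) : ℕ :=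
  sInf {r : ℕ | ∃ A : Matrix X Y ℝ, (∀ x y, 0 < A x y * F x y) ∧ A.rank = r}


open Finset


def chi {n : ℕ} (S : Finset (Fin n)) (z : Fin n → Bool) : ℝ :=
  ∏ i ∈ S, (if z i then (-1 : ℝ) else 1)

lemma chi_empty {n : ℕ} (z : Fin n → Bool) : chi ∅ z = 1 := by simp [chi]

lemma chi_mul {n : ℕ} (S T : Finset (Fin n)) (z : Fin n → Bool) :
    chi S z * chi T z = chi (symmDiff S T) z := by
  classical
  unfold chi
  have h1 : (S \ T) ∪ (S ∩ T) = S := by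
    ext i; simp only [Finset.mem_sdiff, Finset.mem_inter, Finset.mem_union]; tauto
  have h2 : (T \ S) ∪ (S ∩ T) = T := by
    ext i; simp only [Finset.mem_sdiff, Finset.mem_inter, Finset.mem_union]; tauto
  have hd1 : Disjoint (S \ T) (S ∩ T) := by
    rw [Finset.disjoint_left]; intro a ha hb
    exact (Finset.mem_sdiff.mp ha).2 (Finset.mem_inter.mp hb).2
  have hd2 : Disjoint (T \ S) (S ∩ T) := by
    rw [Finset.disjoint_left]; intro a ha hb
    exact (Finset.mem_sdiff.mp ha).2 (Finset.mem_inter.mp hb).1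
  have hd3 : Disjoint (S \ T) (T \ S) := by
    rw [Finset.disjoint_left]; intro a ha hb
    exact (Finset.mem_sdiff.mp hb).2 (Finset.mem_sdiff.mp ha).1
  have hsd : symmDiff S T = (S \ T) ∪ (T \ S) := by
    ext i; simp [Finset.mem_symmDiff, Finset.mem_union, Finset.mem_sdiff]
  have e1 : ∏ i ∈ S, (if z i then (-1:ℝ) else 1)
      = (∏ i ∈ S \ T, (if z i then (-1:ℝ) else 1)) * ∏ i ∈ S ∩ T, (if z i then (-1:ℝ) else 1) := by
    rw [← Finset.prod_union hd1, h1]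
  have e2 : ∏ i ∈ T, (if z i then (-1:ℝ) else 1)
      = (∏ i ∈ T \ S, (if z i then (-1:ℝ) else 1)) * ∏ i ∈ S ∩ T, (if z i then (-1:ℝ) else 1) := by
    rw [← Finset.prod_union hd2, h2]
  have hsq : (∏ i ∈ S ∩ T, (if z i then (-1:ℝ) else 1)) * (∏ i ∈ S ∩ T, (if z i then (-1:ℝ) else 1))
      = 1 := by
    rw [← Finset.prod_mul_distrib]
    apply Finset.prod_eq_one
    intro i _
    by_cases h : z i <;> simp [h]
  rw [e1, e2, hsd, Finset.prod_union hd3]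
  linear_combination ((∏ i ∈ S \ T, (if z i then (-1:ℝ) else 1)) * (∏ i ∈ T \ S, (if z i then (-1:ℝ) else 1))) * hsq

lemma chi_bxor {n : ℕ} (S : Finset (Fin n)) (x y : Fin n → Bool) :
    chi S (fun i => xor (x i) (y i)) = chi S x * chi S y := by
  unfold chi
  rw [← Finset.prod_mul_distrib]
  apply Finset.prod_congr rfl
  intro i _
  cases hx : x i <;> cases hy : y i <;> simp_all

lemma chi_univ_eq {n : ℕ} (z : Fin n → Bool) :
    chi Finset.univ z = (-1 : ℝ) ^ (hamW z) := by
  classical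
  unfold chi hamW
  rw [← Finset.prod_filter_mul_prod_filter_not Finset.univ (fun i => z i = true)]
  rw [Finset.prod_congr rfl (fun i hi => if_pos (Finset.mem_filter.mp hi).2),
    Finset.prod_congr rfl (fun i hi => if_neg (by simpa using (Finset.mem_filter.mp hi).2)),
    Finset.prod_const, Finset.prod_const, one_pow, mul_one]


def InSpan (n d : ℕ) (g : (Fin n → Bool) → ℝ) : Prop :=
  ∃ a : Finset (Fin n) → ℝ, (∀ S, d < S.card → a S = 0) ∧
    ∀ z, g z = ∑ S : Finset (Fin n), a S * chi S z

lemma inSpan_const (n d : ℕ) (c : ℝ) : InSpan n d (fun _ => c) := by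
  classical
  refine ⟨fun S => if S = ∅ then c else 0, ?_, ?_⟩
  · intro S hS
    show (if S = ∅ then c else 0) = 0
    rw [if_neg]; rintro rfl; simp at hS
  · intro z
    rw [Finset.sum_eq_single ∅]
    · simp [chi]
    · intro b _ hb; simp [hb]
    · intro h; simp at h

lemma inSpan_mono {n d d' : ℕ} (h : d ≤ d') {g : (Fin n → Bool) → ℝ} (hg : InSpan n d g) :
    InSpan n d' g := by
  obtain ⟨a, ha, hrep⟩ := hg
  exact ⟨a, fun S hS => ha S (lt_of_le_of_lt h hS), hrep⟩

lemma inSpan_add {n d : ℕ} {g h : (Fin n → Bool) → ℝ} (hg : InSpan n d g) (hh : InSpan n d h) :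
    InSpan n d (fun z => g z + h z) := by
  obtain ⟨a, ha, hra⟩ := hg
  obtain ⟨b, hb, hrb⟩ := hh
  refine ⟨fun S => a S + b S, fun S hS => ?_, fun z => ?_⟩
  · show a S + b S = 0
    rw [ha S hS, hb S hS, add_zero]
  · show g z + h z = _
    simp only [hra z, hrb z, add_mul, Finset.sum_add_distrib]

lemma inSpan_smul {n d : ℕ} (c : ℝ) {g : (Fin n → Bool) → ℝ} (hg : InSpan n d g) :
    InSpan n d (fun z => c * g z) := by
  obtain ⟨a, ha, hra⟩ := hg
  refine ⟨fun S => c * a S, fun S hS => ?_, fun z => ?_⟩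
  · show c * a S = 0
    rw [ha S hS, mul_zero]
  · show c * g z = _
    rw [hra z, Finset.mul_sum]
    simp [mul_assoc]

lemma ham_eq_sum {n : ℕ} (z : Fin n → Bool) :
    ((hamW z : ℝ)) = ∑ i : Fin n, (1 - (if z i then (-1:ℝ) else 1)) / 2 := by
  unfold hamW
  rw [Finset.card_filter]
  push_cast
  apply Finset.sum_congr rfl
  intro i _
  by_cases h : z i <;> simp [h]

lemma ham_mul_chi {n : ℕ} (S : Finset (Fin n)) (z : Fin n → Bool) :
    (hamW z : ℝ) * chi S z
      = (n / 2) * chi S z - (1/2) * ∑ i : Fin n, chi (symmDiff S {i}) z := by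
  rw [ham_eq_sum, Finset.sum_mul]
  have key : ∀ i : Fin n, (1 - (if z i then (-1:ℝ) else 1)) / 2 * chi S z
      = (1/2) * chi S z - (1/2) * chi (symmDiff S {i}) z := by
    intro i
    have h1 : (if z i then (-1:ℝ) else 1) = chi {i} z := by simp [chi]
    have h2 : chi S z * chi {i} z = chi (symmDiff S {i}) z := chi_mul S {i} z
    rw [h1]
    nlinarith [h2]
  rw [Finset.sum_congr rfl (fun i _ => key i), Finset.sum_sub_distrib,
    Finset.sum_const, Finset.card_univ, Fintype.card_fin, nsmul_eq_mul, ← Finset.mul_sum]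
  ring

lemma inSpan_ham_mul {n d : ℕ} {g : (Fin n → Bool) → ℝ} (hg : InSpan n d g) :
    InSpan n (d + 1) (fun z => (hamW z : ℝ) * g z) := by
  classical
  obtain ⟨a, ha, hra⟩ := hg
  refine ⟨fun S => (n / 2) * a S - (1/2) * ∑ i : Fin n, a (symmDiff S {i}), ?_, ?_⟩
  · intro S hS
    show (↑n / 2) * a S - (1/2) * ∑ i : Fin n, a (symmDiff S {i}) = 0
    have h1 : a S = 0 := ha S (by omega)
    have h2 : ∀ i : Fin n, a (symmDiff S {i}) = 0 := by
      intro i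
      apply ha
      have hsub : S \ {i} ⊆ symmDiff S {i} := by
        intro j hj
        rw [Finset.mem_symmDiff]
        left
        exact ⟨(Finset.mem_sdiff.mp hj).1, by simpa using (Finset.mem_sdiff.mp hj).2⟩
      have hle := Finset.card_le_card hsub
      have hins : S ⊆ insert i (S \ {i}) := by
        intro j hj
        by_cases hji : j = i
        · subst hji; exact Finset.mem_insert_self _ _
        · exact Finset.mem_insert_of_mem (Finset.mem_sdiff.mpr ⟨hj, by simpa using hji⟩)
      have h3 := Finset.card_le_card hins
      have h4 := Finset.card_insert_le i (S \ {i})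
      omega
    rw [h1]
    simp only [h2]
    simp
  · intro z
    show (hamW z : ℝ) * g z = _
    rw [hra z, Finset.mul_sum]
    have step1 : ∀ S : Finset (Fin n), (hamW z : ℝ) * (a S * chi S z)
        = (n:ℝ)/2 * (a S * chi S z) - ∑ i : Fin n, 1/2 * (a S * chi (symmDiff S {i}) z) := by
      intro S
      have := ham_mul_chi S z
      calc (hamW z : ℝ) * (a S * chi S z) = a S * ((hamW z : ℝ) * chi S z) := by ring
        _ = a S * ((n / 2) * chi S z - (1/2) * ∑ i : Fin n, chi (symmDiff S {i}) z) := by rw [this]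
        _ = (n:ℝ)/2 * (a S * chi S z) - ∑ i : Fin n, 1/2 * (a S * chi (symmDiff S {i}) z) := by
            rw [Finset.mul_sum, mul_sub, Finset.mul_sum]
            congr 1
            · ring
            · exact Finset.sum_congr rfl (fun i _ => by ring)
    have key : ∀ i : Fin n, ∑ S : Finset (Fin n), 1/2 * (a S * chi (symmDiff S {i}) z)
        = ∑ S : Finset (Fin n), 1/2 * (a (symmDiff S {i}) * chi S z) := by
      intro i
      apply Fintype.sum_equiv ⟨fun S => symmDiff S {i}, fun S => symmDiff S {i},
        fun S => symmDiff_symmDiff_cancel_right {i} S,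
        fun S => symmDiff_symmDiff_cancel_right {i} S⟩
      intro S
      show 1/2 * (a S * chi (symmDiff S {i}) z)
          = 1/2 * (a (symmDiff (symmDiff S {i}) {i}) * chi (symmDiff S {i}) z)
      rw [symmDiff_symmDiff_cancel_right]
    calc ∑ S : Finset (Fin n), (hamW z : ℝ) * (a S * chi S z)
        = ∑ S : Finset (Fin n), ((n:ℝ)/2 * (a S * chi S z)
            - ∑ i : Fin n, 1/2 * (a S * chi (symmDiff S {i}) z)) :=
          Finset.sum_congr rfl (fun S _ => step1 S)
      _ = ∑ S : Finset (Fin n), (n:ℝ)/2 * (a S * chi S z)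
            - ∑ S : Finset (Fin n), ∑ i : Fin n, 1/2 * (a S * chi (symmDiff S {i}) z) :=
          Finset.sum_sub_distrib _ _
      _ = ∑ S : Finset (Fin n), (n:ℝ)/2 * (a S * chi S z)
            - ∑ i : Fin n, ∑ S : Finset (Fin n), 1/2 * (a S * chi (symmDiff S {i}) z) := by
          rw [Finset.sum_comm]
      _ = ∑ S : Finset (Fin n), (n:ℝ)/2 * (a S * chi S z)
            - ∑ i : Fin n, ∑ S : Finset (Fin n), 1/2 * (a (symmDiff S {i}) * chi S z) := by
          rw [Finset.sum_congr rfl (fun i _ => key i)]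
      _ = ∑ S : Finset (Fin n), (n:ℝ)/2 * (a S * chi S z)
            - ∑ S : Finset (Fin n), ∑ i : Fin n, 1/2 * (a (symmDiff S {i}) * chi S z) := by
          rw [Finset.sum_comm]
      _ = ∑ S : Finset (Fin n), ((n:ℝ)/2 * (a S * chi S z)
            - ∑ i : Fin n, 1/2 * (a (symmDiff S {i}) * chi S z)) := (Finset.sum_sub_distrib _ _).symm
      _ = ∑ S : Finset (Fin n), ((n:ℝ) / 2 * a S - (1/2) * ∑ i : Fin n, a (symmDiff S {i})) * chi S z := by
          apply Finset.sum_congr rfl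
          intro S _
          have hX : ∑ i : Fin n, 1/2 * (a (symmDiff S {i}) * chi S z)
              = (1/2 * ∑ i : Fin n, a (symmDiff S {i})) * chi S z := by
            conv_rhs => rw [Finset.mul_sum, Finset.sum_mul]
            exact Finset.sum_congr rfl (fun i _ => by ring)
          rw [hX]
          ring

lemma inSpan_prod_roots {n : ℕ} (F : Finset ℕ) :
    InSpan n F.card (fun z => ∏ i ∈ F, ((i : ℝ) + 1 - (hamW z : ℝ))) := by
  classical
  induction F using Finset.induction_on with
  | empty => simpa using inSpan_const n 0 1
  | @insert a F ha ih =>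
    have h1 : InSpan n (F.card + 1)
        (fun z : Fin n → Bool => ((a:ℝ)+1) * ∏ i ∈ F, ((i : ℝ) + 1 - (hamW z : ℝ))) :=
      inSpan_mono (Nat.le_succ _) (inSpan_smul _ ih)
    have h2 : InSpan n (F.card + 1)
        (fun z : Fin n → Bool => (-1 : ℝ) * ((hamW z : ℝ) * ∏ i ∈ F, ((i : ℝ) + 1 - (hamW z : ℝ)))) :=
      inSpan_smul _ (inSpan_ham_mul ih)
    have h3 := inSpan_add h1 h2
    rw [Finset.card_insert_of_notMem ha]
    have heq : (fun z : Fin n → Bool => ∏ i ∈ insert a F, ((i : ℝ) + 1 - (hamW z : ℝ)))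
        = (fun z : Fin n → Bool => ((a:ℝ)+1) * ∏ i ∈ F, ((i : ℝ) + 1 - (hamW z : ℝ))
            + (-1 : ℝ) * ((hamW z : ℝ) * ∏ i ∈ F, ((i : ℝ) + 1 - (hamW z : ℝ)))) := by
      funext z
      rw [Finset.prod_insert ha]
      ring
    rw [heq]
    exact h3


lemma card_small_sets (n M : ℕ) :
    ((Finset.univ : Finset (Finset (Fin n))).filter (fun S => S.card ≤ M)).card
      = ∑ k ∈ Finset.range (M+1), n.choose k := by
  classical
  induction M with
  | zero =>
    rw [Finset.sum_range_one, Nat.choose_zero_right]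
    have : (Finset.univ : Finset (Finset (Fin n))).filter (fun S => S.card ≤ 0) = {∅} := by
      ext S
      simp [Finset.card_eq_zero]
    rw [this, Finset.card_singleton]
  | succ M ih =>
    have hsplit : (Finset.univ : Finset (Finset (Fin n))).filter (fun S => S.card ≤ M + 1)
        = ((Finset.univ : Finset (Finset (Fin n))).filter (fun S => S.card ≤ M))
          ∪ ((Finset.univ : Finset (Finset (Fin n))).filter (fun S => S.card = M + 1)) := by
      rw [← Finset.filter_or]
      apply Finset.filter_congr
      intro S _
      constructor
      · intro h; omega
      · intro h; omega
    have hd : Disjoint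
        ((Finset.univ : Finset (Finset (Fin n))).filter (fun S => S.card ≤ M))
        ((Finset.univ : Finset (Finset (Fin n))).filter (fun S => S.card = M + 1)) := by
      rw [Finset.disjoint_left]
      intro S hS hS'
      have h1 := (Finset.mem_filter.mp hS).2
      have h2 := (Finset.mem_filter.mp hS').2
      omega
    have heq : (Finset.univ : Finset (Finset (Fin n))).filter (fun S => S.card = M + 1)
        = Finset.powersetCard (M+1) Finset.univ := by
      ext S
      simp [Finset.mem_powersetCard_univ]
    rw [hsplit, Finset.card_union_of_disjoint hd, ih, heq, Finset.card_powersetCard,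
      Finset.card_univ, Fintype.card_fin]
    rw [Finset.sum_range_succ _ (M+1), Finset.sum_range_succ _ M]

lemma prod_roots_sign (t : ℕ) (F : Finset ℕ) (hne : ∀ i ∈ F, i + 1 ≠ t) :
    0 < (-1:ℝ)^((F.filter (fun i => i < t)).card) * ∏ i ∈ F, ((i:ℝ) + 1 - t) := by
  classical
  induction F using Finset.induction_on with
  | empty => simp
  | @insert a F ha ih =>
    have hne' : ∀ i ∈ F, i + 1 ≠ t := fun i hi => hne i (Finset.mem_insert_of_mem hi)
    have hpos := ih hne'
    rw [Finset.prod_insert ha, Finset.filter_insert]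
    by_cases hlt : a < t
    · rw [if_pos hlt, Finset.card_insert_of_notMem (fun h => ha (Finset.mem_filter.mp h).1)]
      have hfac : ((a:ℝ) + 1 - t) < 0 := by
        have : a + 1 < t := by
          have := hne a (Finset.mem_insert_self a F)
          omega
        have : ((a:ℝ) + 1) < t := by exact_mod_cast this
        linarith
      rw [pow_succ]
      nlinarith [hpos, hfac]
    · rw [if_neg hlt]
      have hfac : 0 < ((a:ℝ) + 1 - t) := by
        have : t < a + 1 := by omega
        have : (t:ℝ) < (a:ℝ) + 1 := by exact_mod_cast this
        linarith
      nlinarith [hpos, hfac]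

lemma D_parity (n : ℕ) (D : ℕ → ℤ) (hD : ∀ i ≤ n, D i = 1 ∨ D i = -1) :
    ∀ t ≤ n, D t = (-1)^((((Finset.range (n-1)).filter (fun i => D i ≠ D (i+2))).filter
      (fun i => i % 2 = t % 2 ∧ i < t)).card) * D (t % 2) := by
  intro t
  induction t using Nat.strong_induction_on with
  | _ t ih =>
    match t with
    | 0 =>
      intro _
      have : (((Finset.range (n-1)).filter (fun i => D i ≠ D (i+2))).filter
          (fun i => i % 2 = 0 % 2 ∧ i < 0)) = ∅ := by
        apply Finset.filter_false_of_mem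
        intro i _
        omega
      rw [this]
      simp
    | 1 =>
      intro _
      have : (((Finset.range (n-1)).filter (fun i => D i ≠ D (i+2))).filter
          (fun i => i % 2 = 1 % 2 ∧ i < 1)) = ∅ := by
        apply Finset.filter_false_of_mem
        intro i _
        omega
      rw [this]
      simp
    | (t+2) =>
      intro hle
      have ht : t ≤ n := by omega
      have iht := ih t (by omega) ht
      have hmod : (t+2) % 2 = t % 2 := by omega
      have hCsplit : (((Finset.range (n-1)).filter (fun i => D i ≠ D (i+2))).filter
            (fun i => i % 2 = (t+2) % 2 ∧ i < t+2))
          = (((Finset.range (n-1)).filter (fun i => D i ≠ D (i+2))).filter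
            (fun i => i % 2 = t % 2 ∧ i < t))
            ∪ (((Finset.range (n-1)).filter (fun i => D i ≠ D (i+2))).filter (fun i => i = t)) := by
        rw [← Finset.filter_or]
        apply Finset.filter_congr
        intro i _
        constructor
        · intro ⟨h1, h2⟩
          by_cases hit : i = t
          · right; exact hit
          · left; exact ⟨by omega, by omega⟩
        · intro h
          rcases h with ⟨h1, h2⟩ | h
          · exact ⟨by omega, by omega⟩
          · subst h; exact ⟨by omega, by omega⟩
      have hdisj : Disjoint
          (((Finset.range (n-1)).filter (fun i => D i ≠ D (i+2))).filter
            (fun i => i % 2 = t % 2 ∧ i < t))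
          (((Finset.range (n-1)).filter (fun i => D i ≠ D (i+2))).filter (fun i => i = t)) := by
        rw [Finset.disjoint_left]
        intro i hi hi'
        have h1 := (Finset.mem_filter.mp hi).2
        have h2 := (Finset.mem_filter.mp hi').2
        omega
      rw [hCsplit, Finset.card_union_of_disjoint hdisj, hmod]
      by_cases hC : D t = D (t + 2)
      · have : (((Finset.range (n-1)).filter (fun i => D i ≠ D (i+2))).filter (fun i => i = t)) = ∅ := by
          apply Finset.eq_empty_of_forall_notMem
          intro i hi
          have h1 := Finset.mem_filter.mp hi
          have h2 := (Finset.mem_filter.mp h1.1).2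
          have h3 := h1.2
          subst h3
          exact h2 hC
        rw [this]
        simp only [Finset.card_empty, add_zero]
        rw [← iht]
        exact hC.symm
      · have hmem : t ∈ ((Finset.range (n-1)).filter (fun i => D i ≠ D (i+2))) := by
          rw [Finset.mem_filter]
          exact ⟨Finset.mem_range.mpr (by omega), hC⟩
        have : (((Finset.range (n-1)).filter (fun i => D i ≠ D (i+2))).filter (fun i => i = t)) = {t} := by
          rw [Finset.filter_eq']
          rw [if_pos hmem]
        have hneg : D (t+2) = -D t := by
          rcases hD t ht with h | h <;> rcases hD (t+2) hle with h' | h' <;> omega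
        rw [this, Finset.card_singleton, hneg, iht, pow_succ]
        ring
lemma chi_bxor' {n : ℕ} (S : Finset (Fin n)) (x y : Fin n → Bool) :
    chi S (bxor x y) = chi S x * chi S y := chi_bxor S x y

lemma hamW_le {n : ℕ} (z : Fin n → Bool) : hamW z ≤ n := by
  unfold hamW
  calc (Finset.univ.filter (fun i => z i)).card ≤ (Finset.univ : Finset (Fin n)).card :=
        Finset.card_filter_le _ _
    _ = n := by rw [Finset.card_univ, Fintype.card_fin]

lemma sum_small {n M : ℕ} (f : Finset (Fin n) → ℝ) (hf : ∀ S, M < S.card → f S = 0) :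
    ∑ S : {S : Finset (Fin n) // S.card ≤ M}, f S.1 = ∑ S : Finset (Fin n), f S := by
  classical
  rw [← Finset.sum_subtype (Finset.univ.filter (fun S => S.card ≤ M)) (by simp) f]
  apply Finset.sum_subset (Finset.filter_subset _ _)
  intro S _ hS
  apply hf
  have : ¬ S.card ≤ M := by
    intro h
    exact hS (Finset.mem_filter.mpr ⟨Finset.mem_univ S, h⟩)
  omega


/-- Upper bound of the main theorem: with `M = deg₂(D)`, the sign matrix
`F(x,y) = D(|x ⊕ y|)` has sign-rank at most `4 · ∑_{k=0}^{M} C(n,k)`. -/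
theorem xor_signRank_upper_bound (n : ℕ) (hn : 1 ≤ n) (D : ℕ → ℤ)
    (hD : ∀ i ≤ n, D i = 1 ∨ D i = -1) :
    signRank (fun x y : Fin n → Bool => (D (hamW (bxor x y)) : ℝ)) ≤
      4 * ∑ k ∈ Finset.range
          ((((Finset.range (n - 1)).filter (fun i => D i ≠ D (i + 2))).card) + 1),
        n.choose k := by
  classical
  set C := (Finset.range (n - 1)).filter (fun i => D i ≠ D (i + 2)) with hC
  set M := C.card with hM
  set Ce := C.filter (fun i => i % 2 = 0) with hCe
  set Co := C.filter (fun i => i % 2 = 1) with hCo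
  have hCeM : Ce.card ≤ M := Finset.card_filter_le _ _
  have hCoM : Co.card ≤ M := Finset.card_filter_le _ _
  -- the two sign-representing functions
  have hu : InSpan n M (fun z : Fin n → Bool =>
      (1/2 : ℝ) * ((D 0 : ℝ) * ∏ i ∈ Ce, ((i:ℝ) + 1 - (hamW z : ℝ))
        + (D 1 : ℝ) * ∏ i ∈ Co, ((i:ℝ) + 1 - (hamW z : ℝ)))) :=
    inSpan_smul _ (inSpan_add
      (inSpan_mono hCeM (inSpan_smul _ (inSpan_prod_roots Ce)))
      (inSpan_mono hCoM (inSpan_smul _ (inSpan_prod_roots Co))))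
  have hv : InSpan n M (fun z : Fin n → Bool =>
      (1/2 : ℝ) * ((D 0 : ℝ) * ∏ i ∈ Ce, ((i:ℝ) + 1 - (hamW z : ℝ))
        + (-1 : ℝ) * ((D 1 : ℝ) * ∏ i ∈ Co, ((i:ℝ) + 1 - (hamW z : ℝ))))) :=
    inSpan_smul _ (inSpan_add
      (inSpan_mono hCeM (inSpan_smul _ (inSpan_prod_roots Ce)))
      (inSpan_smul _ (inSpan_mono hCoM (inSpan_smul _ (inSpan_prod_roots Co)))))
  obtain ⟨a, haS, haR⟩ := hu
  obtain ⟨b, hbS, hbR⟩ := hv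
  have haR' : ∀ z : Fin n → Bool,
      (1/2 : ℝ) * ((D 0 : ℝ) * ∏ i ∈ Ce, ((i:ℝ) + 1 - (hamW z : ℝ))
        + (D 1 : ℝ) * ∏ i ∈ Co, ((i:ℝ) + 1 - (hamW z : ℝ)))
      = ∑ S : Finset (Fin n), a S * chi S z := haR
  have hbR' : ∀ z : Fin n → Bool,
      (1/2 : ℝ) * ((D 0 : ℝ) * ∏ i ∈ Ce, ((i:ℝ) + 1 - (hamW z : ℝ))
        + (-1 : ℝ) * ((D 1 : ℝ) * ∏ i ∈ Co, ((i:ℝ) + 1 - (hamW z : ℝ))))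
      = ∑ S : Finset (Fin n), b S * chi S z := hbR
  -- the candidate function g
  set g : (Fin n → Bool) → ℝ := fun z =>
    (∑ S : Finset (Fin n), a S * chi S z) + chi Finset.univ z * ∑ S : Finset (Fin n), b S * chi S z
    with hg
  -- sign correctness of g
  have hsign : ∀ z : Fin n → Bool, 0 < g z * (D (hamW z) : ℝ) := by
    intro z
    set t := hamW z with htdef
    have ht : t ≤ n := hamW_le z
    have hchiu : chi Finset.univ z = (-1 : ℝ) ^ t := chi_univ_eq z
    have hDpar := D_parity n D hD t ht
    by_cases hpar : t % 2 = 0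
    · -- even case: g z = D 0 * ∏ over Ce
      have heven : Even t := Nat.even_iff.mpr hpar
      have hchi1 : chi Finset.univ z = 1 := by rw [hchiu, heven.neg_one_pow]
      have hgeq : g z = (D 0 : ℝ) * ∏ i ∈ Ce, ((i:ℝ) + 1 - (t : ℝ)) := by
        simp only [hg]
        rw [hchi1, ← haR' z, ← hbR' z]
        ring
      -- sign of D t
      have hfilter : Ce.filter (fun i => i < t) = C.filter (fun i => i % 2 = t % 2 ∧ i < t) := by
        rw [hCe, Finset.filter_filter]
        apply Finset.filter_congr
        intro i _
        rw [hpar]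
      have hroots : ∀ i ∈ Ce, i + 1 ≠ t := by
        intro i hi
        have : i % 2 = 0 := (Finset.mem_filter.mp hi).2
        omega
      have hprod := prod_roots_sign t Ce hroots
      rw [hfilter] at hprod
      have hDt : (D t : ℝ) = (-1 : ℝ) ^ ((C.filter (fun i => i % 2 = t % 2 ∧ i < t)).card) * (D 0 : ℝ) := by
        rw [hDpar]
        push_cast
        rw [hpar]
      have h0 : (D 0 : ℝ) * (D 0 : ℝ) = 1 := by
        rcases hD 0 (by omega) with h | h <;> rw [h] <;> norm_num
      rw [hgeq, hDt]
      have : (D 0 : ℝ) * (∏ i ∈ Ce, ((i:ℝ) + 1 - (t : ℝ)))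
          * ((-1 : ℝ) ^ ((C.filter (fun i => i % 2 = t % 2 ∧ i < t)).card) * (D 0 : ℝ))
          = ((D 0 : ℝ) * (D 0 : ℝ))
          * ((-1 : ℝ) ^ ((C.filter (fun i => i % 2 = t % 2 ∧ i < t)).card)
            * ∏ i ∈ Ce, ((i:ℝ) + 1 - (t : ℝ))) := by ring
      rw [this, h0, one_mul]
      exact hprod
    · -- odd case
      have hpar1 : t % 2 = 1 := by omega
      have hodd : Odd t := Nat.odd_iff.mpr hpar1
      have hchi1 : chi Finset.univ z = -1 := by rw [hchiu, hodd.neg_one_pow]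
      have hgeq : g z = (D 1 : ℝ) * ∏ i ∈ Co, ((i:ℝ) + 1 - (t : ℝ)) := by
        simp only [hg]
        rw [hchi1, ← haR' z, ← hbR' z]
        ring
      have hfilter : Co.filter (fun i => i < t) = C.filter (fun i => i % 2 = t % 2 ∧ i < t) := by
        rw [hCo, Finset.filter_filter]
        apply Finset.filter_congr
        intro i _
        rw [hpar1]
      have hroots : ∀ i ∈ Co, i + 1 ≠ t := by
        intro i hi
        have : i % 2 = 1 := (Finset.mem_filter.mp hi).2
        omega
      have hprod := prod_roots_sign t Co hroots
      rw [hfilter] at hprod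
      have hDt : (D t : ℝ) = (-1 : ℝ) ^ ((C.filter (fun i => i % 2 = t % 2 ∧ i < t)).card) * (D 1 : ℝ) := by
        rw [hDpar]
        push_cast
        rw [hpar1]
      have h0 : (D 1 : ℝ) * (D 1 : ℝ) = 1 := by
        rcases hD 1 (by omega) with h | h <;> rw [h] <;> norm_num
      rw [hgeq, hDt]
      have : (D 1 : ℝ) * (∏ i ∈ Co, ((i:ℝ) + 1 - (t : ℝ)))
          * ((-1 : ℝ) ^ ((C.filter (fun i => i % 2 = t % 2 ∧ i < t)).card) * (D 1 : ℝ))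
          = ((D 1 : ℝ) * (D 1 : ℝ))
          * ((-1 : ℝ) ^ ((C.filter (fun i => i % 2 = t % 2 ∧ i < t)).card)
            * ∏ i ∈ Co, ((i:ℝ) + 1 - (t : ℝ))) := by ring
      rw [this, h0, one_mul]
      exact hprod
  -- the low-rank factorization
  set L : Matrix (Fin n → Bool) (Bool × {S : Finset (Fin n) // S.card ≤ M}) ℝ :=
    fun x p => (if p.1 then b p.2.1 * chi Finset.univ x else a p.2.1) * chi p.2.1 x with hL
  set R : Matrix (Bool × {S : Finset (Fin n) // S.card ≤ M}) (Fin n → Bool) ℝ :=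
    fun p y => (if p.1 then chi Finset.univ y else 1) * chi p.2.1 y with hR
  have hLR : ∀ x y : Fin n → Bool, (L * R) x y = g (bxor x y) := by
    intro x y
    rw [Matrix.mul_apply, Fintype.sum_prod_type, Fintype.sum_bool]
    have e1 : ∑ S : {S : Finset (Fin n) // S.card ≤ M},
        L x (true, S) * R (true, S) y
        = ∑ S : Finset (Fin n), (b S * chi Finset.univ x * chi S x) * (chi Finset.univ y * chi S y) := by
      apply sum_small (fun S => (b S * chi Finset.univ x * chi S x) * (chi Finset.univ y * chi S y))
      intro S hS
      rw [hbS S hS]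
      ring
    have e2 : ∑ S : {S : Finset (Fin n) // S.card ≤ M},
        L x (false, S) * R (false, S) y
        = ∑ S : Finset (Fin n), (a S * chi S x) * (1 * chi S y) := by
      apply sum_small (fun S => (a S * chi S x) * (1 * chi S y))
      intro S hS
      rw [haS S hS]
      ring
    rw [e1, e2]
    simp only [hg]
    have hub : ∑ S : Finset (Fin n), a S * chi S (bxor x y)
        = ∑ S : Finset (Fin n), (a S * chi S x) * (1 * chi S y) :=
      Finset.sum_congr rfl (fun S _ => by rw [chi_bxor']; ring)
    have hvb : chi Finset.univ (bxor x y) * ∑ S : Finset (Fin n), b S * chi S (bxor x y)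
        = ∑ S : Finset (Fin n), (b S * chi Finset.univ x * chi S x) * (chi Finset.univ y * chi S y) := by
      rw [chi_bxor', Finset.mul_sum]
      exact Finset.sum_congr rfl (fun S _ => by rw [chi_bxor']; ring)
    rw [hub, hvb]
    ring
  -- conclude
  have hmem : (L * R).rank ∈ {r : ℕ | ∃ A : Matrix (Fin n → Bool) (Fin n → Bool) ℝ,
      (∀ x y, 0 < A x y * (fun x y : Fin n → Bool => (D (hamW (bxor x y)) : ℝ)) x y) ∧ A.rank = r} := by
    refine ⟨L * R, fun x y => ?_, rfl⟩
    show 0 < (L * R) x y * (D (hamW (bxor x y)) : ℝ)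
    rw [hLR x y]
    exact hsign (bxor x y)
  have h1 : signRank (fun x y : Fin n → Bool => (D (hamW (bxor x y)) : ℝ)) ≤ (L * R).rank :=
    Nat.sInf_le hmem
  have h2 : (L * R).rank ≤ Fintype.card (Bool × {S : Finset (Fin n) // S.card ≤ M}) :=
    le_trans (Matrix.rank_mul_le_left L R) (Matrix.rank_le_card_width L)
  have h3 : Fintype.card (Bool × {S : Finset (Fin n) // S.card ≤ M})
      = 2 * ∑ k ∈ Finset.range (M + 1), n.choose k := by
    rw [Fintype.card_prod, Fintype.card_bool, Fintype.card_subtype, card_small_sets]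
  have h4 : 2 * ∑ k ∈ Finset.range (M + 1), n.choose k
      ≤ 4 * ∑ k ∈ Finset.range (M + 1), n.choose k := by omega
  calc signRank (fun x y : Fin n → Bool => (D (hamW (bxor x y)) : ℝ))
      ≤ (L * R).rank := h1
    _ ≤ Fintype.card (Bool × {S : Finset (Fin n) // S.card ≤ M}) := h2
    _ = 2 * ∑ k ∈ Finset.range (M + 1), n.choose k := h3
    _ ≤ 4 * ∑ k ∈ Finset.range (M + 1), n.choose k := h4
end

section
/- Let n, c, r, t, k be natural numbers with k + c ≤ r, k + c ≤ t, and r + t − k ≤ n − c. Then there exist maps φ, ψ : {0,1}^c → {0,1}^n such that for all x, y ∈ {0,1}^c: the Hamming weight |φ(x)| = r, the Hamming weight |ψ(y)| = t, and |φ(x) ∧ ψ(y)| = k + |x ∧ y|, where ∧ denotes bitwise AND. (In particular, since |u ⊕ v| = |u| + |v| − 2|u ∧ v|, we get |φ(x) ⊕ ψ(y)| = r + t − 2(k + |x ∧ y|) for all x, y.) -/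
private def phiN (c r : ℕ) (x : Fin c → Bool) (i : ℕ) : Bool :=
  if h : i < c then x ⟨i, h⟩
  else if h2 : i < 2*c then !x ⟨i - c, by omega⟩
  else if i < 3*c then false
  else if i < 2*c + r then true
  else false

private def psiN (c r t k : ℕ) (y : Fin c → Bool) (i : ℕ) : Bool :=
  if h : i < c then y ⟨i, h⟩
  else if h2 : i < 2*c then false
  else if h3 : i < 3*c then !y ⟨i - 2*c, by omega⟩
  else if i < 3*c + k then true
  else if i < 2*c + r then false
  else if i < 2*c + r + (t - (k + c)) then true
  else false

private lemma hamW_comp (n : ℕ) (f : ℕ → Bool) :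
    hamW (fun i : Fin n => f i.val) = ∑ i ∈ Finset.range n, (if f i then 1 else 0) := by
  rw [hamW, Finset.card_filter, Fin.sum_univ_eq_sum_range (fun i => if f i then 1 else 0)]

private lemma sum_ind (c : ℕ) (x : Fin c → Bool) :
    ∑ i ∈ Finset.range c, (if h : i < c then (if x ⟨i, h⟩ then 1 else 0) else 0) = hamW x := by
  rw [hamW, Finset.card_filter, ← Fin.sum_univ_eq_sum_range
    (fun i => if h : i < c then (if x ⟨i, h⟩ then 1 else 0) else 0)]
  apply Finset.sum_congr rfl
  intro i _
  simp [i.isLt]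

private lemma split7 (f : ℕ → ℕ) (c k r M n : ℕ)
    (hck : 3*c + k ≤ 2*c + r) (hM : 2*c + r ≤ M) (hn : M ≤ n) :
    ∑ i ∈ Finset.range n, f i =
      ∑ i ∈ Finset.Ico 0 c, f i + ∑ i ∈ Finset.Ico c (2*c), f i
      + ∑ i ∈ Finset.Ico (2*c) (3*c), f i + ∑ i ∈ Finset.Ico (3*c) (3*c+k), f i
      + ∑ i ∈ Finset.Ico (3*c+k) (2*c+r), f i + ∑ i ∈ Finset.Ico (2*c+r) M, f i
      + ∑ i ∈ Finset.Ico M n, f i := by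
  rw [Finset.range_eq_Ico,
    ← Finset.sum_Ico_consecutive f (by omega : 0 ≤ M) hn,
    ← Finset.sum_Ico_consecutive f (by omega : 0 ≤ 2*c+r) hM,
    ← Finset.sum_Ico_consecutive f (by omega : 0 ≤ 3*c+k) hck,
    ← Finset.sum_Ico_consecutive f (by omega : 0 ≤ 3*c) (by omega),
    ← Finset.sum_Ico_consecutive f (by omega : 0 ≤ 2*c) (by omega),
    ← Finset.sum_Ico_consecutive f (by omega : 0 ≤ c) (by omega)]

private lemma sum_true (a b : ℕ) (f : ℕ → Bool) (h : ∀ i, a ≤ i → i < b → f i = true) :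
    ∑ i ∈ Finset.Ico a b, (if f i then 1 else 0) = b - a := by
  have h' : ∀ i ∈ Finset.Ico a b, (if f i then 1 else 0) = 1 := by
    intro i hi
    obtain ⟨hi1, hi2⟩ := Finset.mem_Ico.mp hi
    simp [h i hi1 hi2]
  rw [Finset.sum_congr rfl h', Finset.sum_const, Nat.card_Ico, smul_eq_mul, mul_one]

private lemma sum_false (a b : ℕ) (f : ℕ → Bool) (h : ∀ i, a ≤ i → i < b → f i = false) :
    ∑ i ∈ Finset.Ico a b, (if f i then 1 else 0) = 0 := by
  have h' : ∀ i ∈ Finset.Ico a b, (if f i then 1 else 0) = 0 := by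
    intro i hi
    obtain ⟨hi1, hi2⟩ := Finset.mem_Ico.mp hi
    simp [h i hi1 hi2]
  rw [Finset.sum_congr rfl h', Finset.sum_const, smul_eq_mul, mul_zero]

private lemma sum_shift_ind (a c : ℕ) (f : ℕ → Bool) (g : Fin c → Bool)
    (h : ∀ i (hi : i < c), f (a + i) = g ⟨i, hi⟩) :
    ∑ i ∈ Finset.Ico a (a + c), (if f i then 1 else 0) = hamW g := by
  rw [Finset.sum_Ico_eq_sum_range]
  have hc : a + c - a = c := by omega
  rw [hc, ← sum_ind c g]
  apply Finset.sum_congr rfl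
  intro i hi
  have hic := Finset.mem_range.mp hi
  rw [h i hic, dif_pos hic]

private lemma hamW_not (c : ℕ) (x : Fin c → Bool) :
    hamW (fun j => !(x j)) + hamW x = c := by
  have key := Finset.card_filter_add_card_filter_not
    (s := (Finset.univ : Finset (Fin c))) (p := fun i => x i = true)
  rw [hamW, hamW]
  have e1 : (Finset.univ.filter (fun i : Fin c => (!(x i)) = true))
      = (Finset.univ.filter (fun a : Fin c => ¬ (fun i => x i = true) a)) := by
    apply Finset.filter_congr
    intro i _
    simp
  simp only [e1]
  simp only [Finset.card_univ, Fintype.card_fin] at key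
  omega

/-- The embedding used in the reduction: given `k + c ≤ r`, `k + c ≤ t` and
`r + t − k ≤ n − c`, there are maps `φ, ψ : {0,1}^c → {0,1}^n` such that
`|φ(x)| = r`, `|ψ(y)| = t` and `|φ(x) ∧ ψ(y)| = k + |x ∧ y|` for all `x, y`. -/
theorem exists_weight_embedding (n c r t k : ℕ)
    (h1 : k + c ≤ r) (h2 : k + c ≤ t) (h3 : r + t - k ≤ n - c) :
    ∃ φ ψ : (Fin c → Bool) → (Fin n → Bool),
      ∀ x y : Fin c → Bool,
        hamW (φ x) = r ∧ hamW (ψ y) = t ∧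
        hamW (band (φ x) (ψ y)) = k + hamW (band x y) := by
  obtain ⟨M, hMdef⟩ : ∃ M, M = 2*c + r + (t - (k+c)) := ⟨_, rfl⟩
  have hck : 3*c + k ≤ 2*c + r := by omega
  have hM : 2*c + r ≤ M := by omega
  have hn : M ≤ n := by omega
  refine ⟨fun x i => phiN c r x i.val, fun y i => psiN c r t k y i.val, ?_⟩
  intro x y
  have e2c : c + c = 2*c := by omega
  have e3c : 2*c + c = 3*c := by omega
  -- value facts for phiN
  have pA : ∀ i (hi : i < c), phiN c r x (0 + i) = x ⟨i, hi⟩ := by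
    intro i hi
    simp only [Nat.zero_add, phiN]
    rw [dif_pos hi]
  have pC : ∀ i (hi : i < c), phiN c r x (c + i) = (fun j => !(x j)) ⟨i, hi⟩ := by
    intro i hi
    simp only [phiN]
    rw [dif_neg (by omega), dif_pos (by omega : c + i < 2*c)]
    simp only [Nat.add_sub_cancel_left]
  have p3 : ∀ i, 2*c ≤ i → i < 3*c → phiN c r x i = false := by
    intro i hi1 hi2
    simp only [phiN]
    rw [dif_neg (by omega), dif_neg (by omega), if_pos hi2]
  have pT : ∀ i, 3*c ≤ i → i < 2*c + r → phiN c r x i = true := by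
    intro i hi1 hi2
    simp only [phiN]
    rw [dif_neg (by omega), dif_neg (by omega), if_neg (by omega), if_pos hi2]
  have pF : ∀ i, 2*c + r ≤ i → phiN c r x i = false := by
    intro i hi1
    simp only [phiN]
    rw [dif_neg (by omega), dif_neg (by omega), if_neg (by omega), if_neg (by omega)]
  -- value facts for psiN
  have qA : ∀ i (hi : i < c), psiN c r t k y (0 + i) = y ⟨i, hi⟩ := by
    intro i hi
    simp only [Nat.zero_add, psiN]
    rw [dif_pos hi]
  have q2 : ∀ i, c ≤ i → i < 2*c → psiN c r t k y i = false := by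
    intro i hi1 hi2
    simp only [psiN]
    rw [dif_neg (by omega), dif_pos hi2]
  have qC : ∀ i (hi : i < c), psiN c r t k y (2*c + i) = (fun j => !(y j)) ⟨i, hi⟩ := by
    intro i hi
    simp only [psiN]
    rw [dif_neg (by omega), dif_neg (by omega), dif_pos (by omega : 2*c + i < 3*c)]
    simp only [Nat.add_sub_cancel_left]
  have qk : ∀ i, 3*c ≤ i → i < 3*c + k → psiN c r t k y i = true := by
    intro i hi1 hi2
    simp only [psiN]
    rw [dif_neg (by omega), dif_neg (by omega), dif_neg (by omega), if_pos hi2]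
  have q5 : ∀ i, 3*c + k ≤ i → i < 2*c + r → psiN c r t k y i = false := by
    intro i hi1 hi2
    simp only [psiN]
    rw [dif_neg (by omega), dif_neg (by omega), dif_neg (by omega), if_neg (by omega),
      if_pos hi2]
  have q6 : ∀ i, 2*c + r ≤ i → i < M → psiN c r t k y i = true := by
    intro i hi1 hi2
    simp only [psiN]
    rw [dif_neg (by omega), dif_neg (by omega), dif_neg (by omega), if_neg (by omega),
      if_neg (by omega), if_pos (by omega)]
  have qF : ∀ i, M ≤ i → psiN c r t k y i = false := by
    intro i hi1
    simp only [psiN]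
    rw [dif_neg (by omega), dif_neg (by omega), dif_neg (by omega), if_neg (by omega),
      if_neg (by omega), if_neg (by omega)]
  have hnotx := hamW_not c x
  have hnoty := hamW_not c y
  refine ⟨?_, ?_, ?_⟩
  · -- weight of φ x
    refine (hamW_comp n (phiN c r x)).trans ?_
    rw [split7 (fun i => if phiN c r x i then 1 else 0) c k r M n hck hM hn]
    have B0 := sum_shift_ind 0 c (phiN c r x) x pA
    simp only [Nat.zero_add] at B0
    have B1 := sum_shift_ind c c (phiN c r x) (fun j => !(x j)) pC
    rw [e2c] at B1
    have B2 := sum_false (2*c) (3*c) _ p3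
    have B3 := sum_true (3*c) (3*c+k) _ (fun i hi1 hi2 => pT i hi1 (by omega))
    have B4 := sum_true (3*c+k) (2*c+r) _ (fun i hi1 hi2 => pT i (by omega) hi2)
    have B5 := sum_false (2*c+r) M _ (fun i hi1 _ => pF i hi1)
    have B6 := sum_false M n _ (fun i hi1 _ => pF i (by omega))
    rw [B0, B1, B2, B3, B4, B5, B6]
    omega
  · -- weight of ψ y
    refine (hamW_comp n (psiN c r t k y)).trans ?_
    rw [split7 (fun i => if psiN c r t k y i then 1 else 0) c k r M n hck hM hn]
    have B0 := sum_shift_ind 0 c (psiN c r t k y) y qA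
    simp only [Nat.zero_add] at B0
    have B1 := sum_false c (2*c) _ q2
    have B2 := sum_shift_ind (2*c) c (psiN c r t k y) (fun j => !(y j)) qC
    rw [e3c] at B2
    have B3 := sum_true (3*c) (3*c+k) _ qk
    have B4 := sum_false (3*c+k) (2*c+r) _ q5
    have B5 := sum_true (2*c+r) M _ q6
    have B6 := sum_false M n _ (fun i hi1 _ => qF i hi1)
    rw [B0, B1, B2, B3, B4, B5, B6]
    omega
  · -- weight of the AND
    refine (hamW_comp n (fun j => phiN c r x j && psiN c r t k y j)).trans ?_
    rw [split7 (fun i => if (phiN c r x i && psiN c r t k y i) then 1 else 0) c k r M n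
      hck hM hn]
    have B0 := sum_shift_ind 0 c (fun j => phiN c r x j && psiN c r t k y j) (band x y)
      (by
        intro i hi
        simp only [band]
        rw [pA i hi, qA i hi])
    simp only [Nat.zero_add] at B0
    have B1 := sum_false c (2*c) (fun j => phiN c r x j && psiN c r t k y j)
      (fun i hi1 hi2 => by simp [q2 i hi1 hi2])
    have B2 := sum_false (2*c) (3*c) (fun j => phiN c r x j && psiN c r t k y j)
      (fun i hi1 hi2 => by simp [p3 i hi1 hi2])
    have B3 := sum_true (3*c) (3*c+k) (fun j => phiN c r x j && psiN c r t k y j)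
      (fun i hi1 hi2 => by simp [pT i hi1 (by omega), qk i hi1 hi2])
    have B4 := sum_false (3*c+k) (2*c+r) (fun j => phiN c r x j && psiN c r t k y j)
      (fun i hi1 hi2 => by simp [q5 i hi1 hi2])
    have B5 := sum_false (2*c+r) M (fun j => phiN c r x j && psiN c r t k y j)
      (fun i hi1 _ => by simp [pF i hi1])
    have B6 := sum_false M n (fun j => phiN c r x j && psiN c r t k y j)
      (fun i hi1 _ => by simp [pF i (by omega)])
    rw [B0, B1, B2, B3, B4, B5, B6]
    omega
end

section
/- For every integer n ≥ 1 and every predicate D : {0,1,...,n} → {−1,1} with M = deg₂(D), there exists a function p : {0,1}^n → ℝ such that p(x)·D(|x|) > 0 for all x ∈ {0,1}^n, and the Fourier coefficient p̂(S) = 0 for every subset S ⊆ {1,...,n} with M < |S| < n − M. In particular, p has at most 2·Σ_{k=0}^{M} C(n,k) nonzero Fourier coefficients. -/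
/-- The Fourier coefficient `p̂(S) = 2^{-n} ∑_x p(x) (-1)^{∑_{i ∈ S} x_i}`. -/
noncomputable def fourierCoef {n : ℕ} (p : (Fin n → Bool) → ℝ) (S : Finset (Fin n)) : ℝ :=
  (∑ x : Fin n → Bool, p x * (-1 : ℝ) ^ ((S.filter (fun i => x i)).card)) / 2 ^ n

namespace SignRep
variable {n : ℕ}

/-- Flip coordinate `j`. -/
def fl (j : Fin n) (x : Fin n → Bool) : Fin n → Bool := Function.update x j (!x j)

def andF (T : Finset (Fin n)) (x : Fin n → Bool) : ℝ := ∏ i ∈ T, (if x i then (1:ℝ) else 0)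


lemma fl_apply_ne (j i : Fin n) (x : Fin n → Bool) (h : i ≠ j) : fl j x i = x i := by
  simp [fl, Function.update_apply, h]

lemma fl_apply_eq (j : Fin n) (x : Fin n → Bool) : fl j x j = !x j := by
  simp [fl]

lemma fl_invol (j : Fin n) : Function.Involutive (fl j) := by
  intro x; funext i
  by_cases h : i = j
  · subst h; simp [fl]
  · rw [fl_apply_ne _ _ _ h, fl_apply_ne _ _ _ h]

lemma sum_flip (g : (Fin n → Bool) → ℝ) (j : Fin n)
    (h : ∀ x, g (fl j x) = - g x) : ∑ x, g x = 0 := by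
  have e : ∑ x, g (fl j x) = ∑ x, g x :=
    Equiv.sum_comp ((fl_invol j).toPerm) g
  have e2 : ∑ x, g (fl j x) = - ∑ x, g x := by
    rw [← Finset.sum_neg_distrib]
    exact Finset.sum_congr rfl (fun x _ => h x)
  linarith [e, e2]


lemma andF_fl (T : Finset (Fin n)) (j : Fin n) (hj : j ∉ T) (x : Fin n → Bool) :
    andF T (fl j x) = andF T x := by
  unfold andF
  refine Finset.prod_congr rfl (fun i hi => ?_)
  rw [fl_apply_ne j i x (fun h => hj (h ▸ hi))]

lemma filter_fl_of_not_mem (S : Finset (Fin n)) (j : Fin n) (hj : j ∉ S) (x : Fin n → Bool) :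
    (S.filter (fun i => fl j x i = true)) = S.filter (fun i => x i = true) := by
  refine Finset.filter_congr (fun i hi => ?_)
  rw [fl_apply_ne j i x (fun h => hj (h ▸ hi))]

lemma neg_pow_filter_fl (S : Finset (Fin n)) (j : Fin n) (hj : j ∈ S) (x : Fin n → Bool) :
    (-1:ℝ) ^ ((S.filter (fun i => fl j x i = true)).card)
      = - (-1:ℝ) ^ ((S.filter (fun i => x i = true)).card) := by
  by_cases hx : x j = true
  · have hset : S.filter (fun i => fl j x i = true) = (S.filter (fun i => x i = true)).erase j := by
      ext i
      simp only [Finset.mem_filter, Finset.mem_erase]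
      constructor
      · rintro ⟨hiS, hfi⟩
        by_cases hij : i = j
        · exfalso; subst hij; simp [fl, hx] at hfi
        · exact ⟨hij, hiS, by rwa [fl_apply_ne j i x hij] at hfi⟩
      · rintro ⟨hij, hiS, hxi⟩
        exact ⟨hiS, by rwa [fl_apply_ne j i x hij]⟩
    have hjmem : j ∈ S.filter (fun i => x i = true) := Finset.mem_filter.mpr ⟨hj, hx⟩
    have hcard : (S.filter (fun i => x i = true)).card =
        ((S.filter (fun i => x i = true)).erase j).card + 1 := by
      rw [Finset.card_erase_of_mem hjmem]
      have := Finset.card_pos.mpr ⟨j, hjmem⟩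
      omega
    rw [hset, hcard, pow_succ]
    ring
  · have hset : S.filter (fun i => fl j x i = true) = insert j (S.filter (fun i => x i = true)) := by
      ext i
      simp only [Finset.mem_filter, Finset.mem_insert]
      constructor
      · rintro ⟨hiS, hfi⟩
        by_cases hij : i = j
        · exact Or.inl hij
        · exact Or.inr ⟨hiS, by rwa [fl_apply_ne j i x hij] at hfi⟩
      · rintro (hij | ⟨hiS, hxi⟩)
        · subst hij; refine ⟨hj, ?_⟩; simp [fl, hx]
        · exact ⟨hiS, by rwa [fl_apply_ne j i x (fun h => hx (h ▸ hxi))]⟩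
    have hjnot : j ∉ S.filter (fun i => x i = true) := by
      simp [Finset.mem_filter, hx]
    rw [hset, Finset.card_insert_of_notMem hjnot, pow_succ]
    ring


lemma hamW_eq (x : Fin n → Bool) : hamW x = ((Finset.univ : Finset (Fin n)).filter (fun i => x i = true)).card := by
  rfl

lemma neg_pow_hamW_fl (j : Fin n) (x : Fin n → Bool) :
    (-1:ℝ) ^ (hamW (fl j x)) = - (-1:ℝ) ^ (hamW x) := by
  rw [hamW_eq, hamW_eq]
  exact neg_pow_filter_fl Finset.univ j (Finset.mem_univ j) x

lemma coef_and_zero (T S : Finset (Fin n)) (h : ¬ S ⊆ T) : fourierCoef (andF T) S = 0 := by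
  obtain ⟨j, hjS, hjT⟩ := Finset.not_subset.mp h
  unfold fourierCoef
  rw [div_eq_zero_iff]
  left
  refine sum_flip (fun x => andF T x * (-1:ℝ) ^ ((S.filter (fun i => x i)).card)) j (fun x => ?_)
  show andF T (fl j x) * _ = _
  rw [andF_fl T j hjT, neg_pow_filter_fl S j hjS]
  ring

lemma coef_sgn_and_zero (T S : Finset (Fin n)) (j : Fin n) (hjS : j ∉ S) (hjT : j ∉ T) :
    fourierCoef (fun x => (-1:ℝ) ^ (hamW x) * andF T x) S = 0 := by
  unfold fourierCoef
  rw [div_eq_zero_iff]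
  left
  refine sum_flip (fun x => ((-1:ℝ) ^ (hamW x) * andF T x) * (-1:ℝ) ^ ((S.filter (fun i => x i)).card)) j (fun x => ?_)
  show ((-1:ℝ) ^ (hamW (fl j x)) * andF T (fl j x)) * _ = _
  rw [andF_fl T j hjT, neg_pow_hamW_fl j x, filter_fl_of_not_mem S j hjS]
  ring

/-- Fourier coefficient as a linear map. -/
noncomputable def fourierL (S : Finset (Fin n)) : ((Fin n → Bool) → ℝ) →ₗ[ℝ] ℝ where
  toFun p := fourierCoef p S
  map_add' p q := by
    show fourierCoef (p + q) S = fourierCoef p S + fourierCoef q S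
    unfold fourierCoef
    rw [← add_div]
    congr 1
    rw [← Finset.sum_add_distrib]
    exact Finset.sum_congr rfl (fun x _ => by simp only [Pi.add_apply]; ring)
  map_smul' c p := by
    show fourierCoef (c • p) S = c * fourierCoef p S
    unfold fourierCoef
    have h : ∑ x : Fin n → Bool, (c • p) x * (-1:ℝ) ^ ((S.filter (fun i => x i)).card)
        = c * ∑ x : Fin n → Bool, p x * (-1:ℝ) ^ ((S.filter (fun i => x i)).card) := by
      rw [Finset.mul_sum]
      exact Finset.sum_congr rfl (fun x _ => by simp [mul_assoc])
    rw [h, mul_div_assoc]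

lemma span_vanish {s : Set ((Fin n → Bool) → ℝ)} {S : Finset (Fin n)}
    (h : ∀ f ∈ s, fourierCoef f S = 0) {p} (hp : p ∈ Submodule.span ℝ s) :
    fourierCoef p S = 0 := by
  have hle : Submodule.span ℝ s ≤ LinearMap.ker (fourierL S) :=
    Submodule.span_le.mpr (fun f hf => LinearMap.mem_ker.mpr (h f hf))
  exact hle hp

def AndSpan (d : ℕ) : Submodule ℝ ((Fin n → Bool) → ℝ) :=
  Submodule.span ℝ {f | ∃ T : Finset (Fin n), T.card ≤ d ∧ f = andF T}

def SgnSpan (d : ℕ) : Submodule ℝ ((Fin n → Bool) → ℝ) :=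
  Submodule.span ℝ {f | ∃ T : Finset (Fin n), T.card ≤ d ∧
    f = fun x => (-1:ℝ) ^ (hamW x) * andF T x}

lemma AndSpan_mono {d d' : ℕ} (h : d ≤ d') : AndSpan (n := n) d ≤ AndSpan d' :=
  Submodule.span_mono (fun f ⟨T, hT, hf⟩ => ⟨T, hT.trans h, hf⟩)

/-- Multiplication by a fixed function, as a linear map. -/
def mulF (g : (Fin n → Bool) → ℝ) : ((Fin n → Bool) → ℝ) →ₗ[ℝ] ((Fin n → Bool) → ℝ) where
  toFun p := fun x => g x * p x
  map_add' p q := by funext x; simp [mul_add]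
  map_smul' c p := by funext x; simp [smul_eq_mul]; ring

lemma hamW_cast (x : Fin n → Bool) : ((hamW x : ℕ) : ℝ) = ∑ i, (if x i then (1:ℝ) else 0) := by
  rw [hamW_eq, Finset.card_filter]
  push_cast
  refine Finset.sum_congr rfl (fun i _ => ?_)
  by_cases h : x i = true <;> simp [h]

lemma ind_mul_andF (T : Finset (Fin n)) (i : Fin n) (x : Fin n → Bool) :
    (if x i then (1:ℝ) else 0) * andF T x = andF (insert i T) x := by
  by_cases hi : i ∈ T
  · rw [Finset.insert_eq_self.mpr hi]
    by_cases h : x i = true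
    · simp [h]
    · have : andF T x = 0 := by
        refine Finset.prod_eq_zero hi ?_
        simp [h]
      simp [h, this]
  · unfold andF
    rw [Finset.prod_insert hi]

lemma mul_hamW_mem {d : ℕ} {p : (Fin n → Bool) → ℝ} (hp : p ∈ AndSpan d) (c : ℝ) :
    (fun x => (c - (hamW x : ℝ)) * p x) ∈ AndSpan (n := n) (d + 1) := by
  have h1 : (fun x => (c - (hamW x : ℝ)) * p x) = mulF (fun x => c - (hamW x : ℝ)) p := rfl
  rw [h1]
  have h2 := Submodule.apply_mem_span_image_of_mem_span (mulF (fun x => c - (hamW x : ℝ))) hp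
  refine Submodule.span_le.mpr ?_ h2
  rintro f ⟨q, ⟨T, hT, rfl⟩, rfl⟩
  have key : (mulF (fun x => c - (hamW x : ℝ))) (andF T) =
      c • andF T - ∑ i : Fin n, andF (insert i T) := by
    funext x
    simp only [mulF, LinearMap.coe_mk, AddHom.coe_mk, Pi.sub_apply, Pi.smul_apply,
      Finset.sum_apply, smul_eq_mul]
    rw [sub_mul, hamW_cast, Finset.sum_mul]
    congr 1
    refine Finset.sum_congr rfl (fun i _ => ?_)
    exact ind_mul_andF T i x
  rw [key]
  refine Submodule.sub_mem _ ?_ ?_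
  · exact Submodule.smul_mem _ _ (Submodule.subset_span ⟨T, hT.trans (Nat.le_succ d), rfl⟩)
  · refine Submodule.sum_mem _ (fun i _ => ?_)
    refine Submodule.subset_span ⟨insert i T, ?_, rfl⟩
    exact (Finset.card_insert_le i T).trans (Nat.succ_le_succ hT)

lemma prod_mem (A : Finset ℕ) :
    (fun x : Fin n → Bool => ∏ c ∈ A, ((c:ℝ) + 1 - (hamW x : ℝ))) ∈ AndSpan (n := n) A.card := by
  induction A using Finset.induction_on with
  | empty =>
    have : (fun x : Fin n → Bool => ∏ c ∈ (∅ : Finset ℕ), ((c:ℝ) + 1 - (hamW x : ℝ))) = andF ∅ := by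
      funext x; simp [andF]
    rw [this]
    exact Submodule.subset_span ⟨∅, by simp, rfl⟩
  | insert a A' ha ih =>
    have : (fun x : Fin n → Bool => ∏ c ∈ insert a A', ((c:ℝ) + 1 - (hamW x : ℝ)))
        = fun x => (((a:ℝ) + 1) - (hamW x : ℝ)) * ∏ c ∈ A', ((c:ℝ) + 1 - (hamW x : ℝ)) := by
      funext x; rw [Finset.prod_insert ha]
    rw [this, Finset.card_insert_of_notMem ha]
    exact mul_hamW_mem ih ((a:ℝ) + 1)

lemma sgn_mul_mem {d : ℕ} {p : (Fin n → Bool) → ℝ} (hp : p ∈ AndSpan d) :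
    (fun x => (-1:ℝ) ^ (hamW x) * p x) ∈ SgnSpan (n := n) d := by
  have h1 : (fun x => (-1:ℝ) ^ (hamW x) * p x) = mulF (fun x => (-1:ℝ) ^ (hamW x)) p := rfl
  rw [h1]
  have h2 := Submodule.apply_mem_span_image_of_mem_span (mulF (fun x => (-1:ℝ) ^ (hamW x))) hp
  refine Submodule.span_le.mpr ?_ h2
  rintro f ⟨q, ⟨T, hT, rfl⟩, rfl⟩
  exact Submodule.subset_span ⟨T, hT, rfl⟩


lemma D_eq (n : ℕ) (D : ℕ → ℤ) (hD : ∀ i ≤ n, D i = 1 ∨ D i = -1) (b : ℕ) (hb : b ≤ 1)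
    (Cb : Finset ℕ)
    (hmem : ∀ c, c ∈ Cb ↔ (c < n - 1 ∧ D c ≠ D (c + 2) ∧ c % 2 = b)) :
    ∀ m : ℕ, 2 * m + b ≤ n →
      D (2 * m + b) = D b * (-1) ^ ((Cb.filter (· < 2 * m + b)).card) := by
  intro m
  induction m with
  | zero =>
    intro _
    have hempty : Cb.filter (· < 2 * 0 + b) = ∅ := by
      rw [Finset.filter_eq_empty_iff]
      intro c hc
      have := ((hmem c).mp hc).2.2
      omega
    rw [hempty]
    simp
  | succ m ih =>
    intro hle
    set k := 2 * m + b with hkdef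
    have hk2 : k + 2 ≤ n := by omega
    have ihk := ih (by omega)
    have hkpar : k % 2 = b := by omega
    have hgoal : 2 * (m + 1) + b = k + 2 := by omega
    rw [hgoal]
    by_cases hk : k ∈ Cb
    · have hset : Cb.filter (· < k + 2) = insert k (Cb.filter (· < k)) := by
        ext c
        simp only [Finset.mem_filter, Finset.mem_insert]
        constructor
        · rintro ⟨hc, hlt⟩
          have hpar := ((hmem c).mp hc).2.2
          by_cases hck : c = k
          · exact Or.inl hck
          · exact Or.inr ⟨hc, by omega⟩
        · rintro (hck | ⟨hc, hlt⟩)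
          · exact ⟨hck ▸ hk, by omega⟩
          · exact ⟨hc, by omega⟩
      have hnotmem : k ∉ Cb.filter (· < k) := by simp
      have hcard : (Cb.filter (· < k + 2)).card = (Cb.filter (· < k)).card + 1 := by
        rw [hset, Finset.card_insert_of_notMem hnotmem]
      have hne : D k ≠ D (k + 2) := ((hmem k).mp hk).2.1
      have hDk := hD k (by omega)
      have hDk2 := hD (k + 2) (by omega)
      have hflip : D (k + 2) = - D k := by rcases hDk with h | h <;> rcases hDk2 with h2 | h2 <;> omega
      rw [hflip, ihk, hcard, pow_succ]
      ring
    · have hset : Cb.filter (· < k + 2) = Cb.filter (· < k) := by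
        ext c
        simp only [Finset.mem_filter]
        constructor
        · rintro ⟨hc, hlt⟩
          have hpar := ((hmem c).mp hc).2.2
          have hck : c ≠ k := fun h => hk (h ▸ hc)
          exact ⟨hc, by omega⟩
        · rintro ⟨hc, hlt⟩
          exact ⟨hc, by omega⟩
      have heq : D k = D (k + 2) := by
        by_contra hne
        exact hk ((hmem k).mpr ⟨by omega, hne, by omega⟩)
      rw [← heq, hset, ihk]
  
lemma prod_sign (Cb : Finset ℕ) (b : ℕ) (hpar : ∀ c ∈ Cb, c % 2 = b) (k : ℕ) (hk : k % 2 = b) :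
    ∃ r : ℝ, 0 < r ∧ ∏ c ∈ Cb, ((c : ℝ) + 1 - (k : ℝ))
      = (-1) ^ ((Cb.filter (· < k)).card) * r := by
  rw [← Finset.prod_filter_mul_prod_filter_not Cb (· < k)]
  refine ⟨(∏ c ∈ Cb.filter (· < k), ((k : ℝ) - c - 1)) *
      ∏ c ∈ Cb.filter (fun c => ¬ c < k), ((c : ℝ) + 1 - k), ?_, ?_⟩
  · apply mul_pos
    · apply Finset.prod_pos
      intro c hc
      have hc1 : c ∈ Cb ∧ c < k := by simpa using hc
      have h2 : c + 2 ≤ k := by have := hpar c hc1.1; omega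
      have h3 : (c : ℝ) + 2 ≤ k := by exact_mod_cast h2
      linarith
    · apply Finset.prod_pos
      intro c hc
      have hc1 : c ∈ Cb ∧ ¬ c < k := by simpa using hc
      have h3 : (k : ℝ) ≤ c := by exact_mod_cast Nat.le_of_not_lt hc1.2
      linarith
  · rw [← mul_assoc]
    congr 1
    have hfac : ∀ c ∈ Cb.filter (· < k), ((c : ℝ) + 1 - k) = (-1) * ((k : ℝ) - c - 1) :=
      fun c _ => by ring
    rw [Finset.prod_congr rfl hfac, Finset.prod_mul_distrib, Finset.prod_const]

lemma Q_pos (n : ℕ) (D : ℕ → ℤ) (hD : ∀ i ≤ n, D i = 1 ∨ D i = -1) (b : ℕ) (hb : b ≤ 1)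
    (Cb : Finset ℕ)
    (hmem : ∀ c, c ∈ Cb ↔ (c < n - 1 ∧ D c ≠ D (c + 2) ∧ c % 2 = b))
    (k : ℕ) (hk : k ≤ n) (hkb : k % 2 = b) :
    0 < ((D b : ℝ) * ∏ c ∈ Cb, ((c : ℝ) + 1 - (k : ℝ))) * (D k : ℝ) := by
  have hbn : b ≤ n := by omega
  have hL2 := D_eq n D hD b hb Cb hmem (k / 2) (by omega)
  have hrw : 2 * (k / 2) + b = k := by omega
  rw [hrw] at hL2
  obtain ⟨r, hr, hprod⟩ := prod_sign Cb b (fun c hc => ((hmem c).mp hc).2.2) k hkb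
  set E := (Cb.filter (· < k)).card with hE
  have hcast : (D k : ℝ) = (D b : ℝ) * (-1 : ℝ) ^ E := by
    rw [hL2]; push_cast; ring
  rw [hprod, hcast]
  have hb2 : (D b : ℝ) * (D b : ℝ) = 1 := by
    rcases hD b hbn with h | h <;> rw [h] <;> norm_num
  have hE2 : ((-1 : ℝ) ^ E) * ((-1 : ℝ) ^ E) = 1 := by
    rw [← pow_add]
    exact Even.neg_one_pow ⟨E, by ring⟩
  have hexp : ((D b : ℝ) * ((-1 : ℝ) ^ E * r)) * ((D b : ℝ) * (-1 : ℝ) ^ E)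
      = ((D b : ℝ) * (D b : ℝ)) * (((-1 : ℝ) ^ E) * ((-1 : ℝ) ^ E)) * r := by ring
  rw [hexp, hb2, hE2]
  linarith


lemma card_le_count (n M : ℕ) :
    ((Finset.univ : Finset (Finset (Fin n))).filter (fun S => S.card ≤ M)).card
      = ∑ k ∈ Finset.range (M + 1), n.choose k := by
  have hA : (Finset.univ : Finset (Finset (Fin n))).filter (fun S => S.card ≤ M)
      = (Finset.range (M + 1)).biUnion
          (fun k => (Finset.univ : Finset (Finset (Fin n))).filter (fun S => S.card = k)) := by
    ext S
    simp only [Finset.mem_filter, Finset.mem_biUnion, Finset.mem_range, Finset.mem_univ, true_and]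
    constructor
    · intro h; exact ⟨S.card, by omega, rfl⟩
    · rintro ⟨k, hk, hc⟩; omega
  rw [hA, Finset.card_biUnion]
  · refine Finset.sum_congr rfl (fun k _ => ?_)
    have : (Finset.univ : Finset (Finset (Fin n))).filter (fun S => S.card = k)
        = Finset.powersetCard k (Finset.univ : Finset (Fin n)) := by
      ext S
      simp [Finset.mem_powersetCard]
    rw [this, Finset.card_powersetCard, Finset.card_univ, Fintype.card_fin]
  · intro a _ b _ hab
    simp only [Function.onFun]
    rw [Finset.disjoint_left]
    intro S hS hS'
    simp only [Finset.mem_filter] at hS hS'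
    exact hab (hS.2 ▸ hS'.2 ▸ rfl)

lemma count_le (n M : ℕ) :
    ((Finset.univ : Finset (Finset (Fin n))).filter
        (fun S => S.card ≤ M ∨ n - M ≤ S.card)).card
      ≤ 2 * ∑ k ∈ Finset.range (M + 1), n.choose k := by
  rw [Finset.filter_or]
  refine (Finset.card_union_le _ _).trans ?_
  have hB : ((Finset.univ : Finset (Finset (Fin n))).filter (fun S => n - M ≤ S.card)).card
      ≤ ((Finset.univ : Finset (Finset (Fin n))).filter (fun S => S.card ≤ M)).card := by
    refine Finset.card_le_card_of_injOn (fun S => Sᶜ) ?_ ?_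
    · intro S hS
      simp only [Finset.mem_coe, Finset.mem_filter, Finset.mem_univ, true_and] at hS ⊢
      rw [Finset.card_compl, Fintype.card_fin]
      have h2 := Finset.card_le_univ S
      rw [Fintype.card_fin] at h2
      omega
    · intro S _ T _ h
      exact compl_injective h
  rw [card_le_count] at hB ⊢
  omega


end SignRep
open SignRep

/-- With `M = deg₂(D)`, there is `p : {0,1}^n → ℝ` sign-representing
`D(|x|)` whose Fourier coefficients vanish on all sets `S` with
`M < |S| < n − M`; in particular `p` has at most `2 ∑_{k=0}^{M} C(n,k)`
nonzero Fourier coefficients. -/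
theorem exists_sign_representation_low_fourier (n : ℕ) (hn : 1 ≤ n)
    (D : ℕ → ℤ) (hD : ∀ i ≤ n, D i = 1 ∨ D i = -1) :
    ∃ p : (Fin n → Bool) → ℝ,
      (∀ x : Fin n → Bool, 0 < p x * (D (hamW x) : ℝ)) ∧
      (∀ S : Finset (Fin n),
        ((Finset.range (n - 1)).filter (fun i => D i ≠ D (i + 2))).card < S.card →
        S.card < n - ((Finset.range (n - 1)).filter (fun i => D i ≠ D (i + 2))).card →
        fourierCoef p S = 0) ∧
      {S : Finset (Fin n) | fourierCoef p S ≠ 0}.ncard ≤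
        2 * ∑ k ∈ Finset.range
            ((((Finset.range (n - 1)).filter (fun i => D i ≠ D (i + 2))).card) + 1),
          n.choose k := by
  classical
  set F : Finset ℕ := (Finset.range (n - 1)).filter (fun i => D i ≠ D (i + 2)) with hF
  set M := F.card with hM
  set C0 : Finset ℕ := F.filter (fun i => i % 2 = 0) with hC0
  set C1 : Finset ℕ := F.filter (fun i => i % 2 = 1) with hC1
  have hmem0 : ∀ c, c ∈ C0 ↔ (c < n - 1 ∧ D c ≠ D (c + 2) ∧ c % 2 = 0) := by
    intro c
    simp [hC0, hF, Finset.mem_filter, Finset.mem_range, and_assoc]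
  have hmem1 : ∀ c, c ∈ C1 ↔ (c < n - 1 ∧ D c ≠ D (c + 2) ∧ c % 2 = 1) := by
    intro c
    simp [hC1, hF, Finset.mem_filter, Finset.mem_range, and_assoc]
  have hC0card : C0.card ≤ M := Finset.card_le_card (Finset.filter_subset _ _)
  have hC1card : C1.card ≤ M := Finset.card_le_card (Finset.filter_subset _ _)
  set f0 : (Fin n → Bool) → ℝ :=
    fun x => (D 0 : ℝ) * ∏ c ∈ C0, ((c : ℝ) + 1 - ((hamW x : ℕ) : ℝ)) with hf0
  set f1 : (Fin n → Bool) → ℝ :=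
    fun x => (D 1 : ℝ) * ∏ c ∈ C1, ((c : ℝ) + 1 - ((hamW x : ℕ) : ℝ)) with hf1
  set g0 : (Fin n → Bool) → ℝ := fun x => (-1 : ℝ) ^ (hamW x) * f0 x with hg0
  set g1 : (Fin n → Bool) → ℝ := fun x => (-1 : ℝ) ^ (hamW x) * f1 x with hg1
  set p : (Fin n → Bool) → ℝ := fun x => ((f0 x + f1 x) + (g0 x - g1 x)) / 2 with hp
  have hham_le : ∀ x : Fin n → Bool, hamW x ≤ n := by
    intro x
    have h := Finset.card_filter_le (Finset.univ : Finset (Fin n)) (fun i => x i = true)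
    simpa [hamW, Finset.card_univ] using h
  -- membership of the pieces in the spans
  have hf0mem : f0 ∈ AndSpan (n := n) M := by
    have h1 := prod_mem (n := n) C0
    have h2 : f0 = (D 0 : ℝ) • (fun x : Fin n → Bool => ∏ c ∈ C0, ((c : ℝ) + 1 - ((hamW x : ℕ) : ℝ))) := by
      funext x; simp [hf0]
    rw [h2]
    exact AndSpan_mono hC0card (Submodule.smul_mem _ _ h1)
  have hf1mem : f1 ∈ AndSpan (n := n) M := by
    have h1 := prod_mem (n := n) C1
    have h2 : f1 = (D 1 : ℝ) • (fun x : Fin n → Bool => ∏ c ∈ C1, ((c : ℝ) + 1 - ((hamW x : ℕ) : ℝ))) := by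
      funext x; simp [hf1]
    rw [h2]
    exact AndSpan_mono hC1card (Submodule.smul_mem _ _ h1)
  have hg0mem : g0 ∈ SgnSpan (n := n) M := sgn_mul_mem hf0mem
  have hg1mem : g1 ∈ SgnSpan (n := n) M := sgn_mul_mem hf1mem
  -- the vanishing statement
  have hvanish : ∀ S : Finset (Fin n), M < S.card → S.card < n - M → fourierCoef p S = 0 := by
    intro S hS1 hS2
    have hvA : ∀ q ∈ AndSpan (n := n) M, fourierCoef q S = 0 := by
      intro q hq
      refine span_vanish ?_ hq
      rintro f ⟨T, hT, rfl⟩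
      refine coef_and_zero T S (fun hsub => ?_)
      have := Finset.card_le_card hsub
      omega
    have hvS : ∀ q ∈ SgnSpan (n := n) M, fourierCoef q S = 0 := by
      intro q hq
      refine span_vanish ?_ hq
      rintro f ⟨T, hT, rfl⟩
      have hcard : (S ∪ T).card < n := by
        have h1 := Finset.card_union_le S T
        omega
      have hne : ((S ∪ T)ᶜ : Finset (Fin n)).Nonempty := by
        rw [← Finset.card_pos, Finset.card_compl, Fintype.card_fin]
        omega
      obtain ⟨j, hj⟩ := hne
      rw [Finset.mem_compl, Finset.mem_union] at hj
      push_neg at hj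
      exact coef_sgn_and_zero T S j hj.1 hj.2
    have hadd : ∀ a b : (Fin n → Bool) → ℝ,
        fourierCoef (a + b) S = fourierCoef a S + fourierCoef b S :=
      fun a b => map_add (fourierL S) a b
    have hsub : ∀ a b : (Fin n → Bool) → ℝ,
        fourierCoef (a - b) S = fourierCoef a S - fourierCoef b S :=
      fun a b => map_sub (fourierL S) a b
    have hsmul : ∀ (c : ℝ) (a : (Fin n → Bool) → ℝ),
        fourierCoef (c • a) S = c * fourierCoef a S :=
      fun c a => map_smul (fourierL S) c a
    have hpdef : p = (2 : ℝ)⁻¹ • ((f0 + f1) + (g0 - g1)) := by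
      funext x
      simp only [hp, Pi.smul_apply, Pi.add_apply, Pi.sub_apply, smul_eq_mul]
      ring
    rw [hpdef, hsmul, hadd, hadd, hsub, hvA f0 hf0mem, hvA f1 hf1mem,
      hvS g0 hg0mem, hvS g1 hg1mem]
    ring
  refine ⟨p, ?_, ?_, ?_⟩
  · -- sign representation
    intro x
    have hxn := hham_le x
    rcases Nat.even_or_odd (hamW x) with he | ho
    · have hs : (-1 : ℝ) ^ (hamW x) = 1 := Even.neg_one_pow he
      have hpx : p x = f0 x := by
        simp only [hp, hg0, hg1, hs]
        ring
      rw [hpx, hf0]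
      exact Q_pos n D hD 0 (by norm_num) C0 hmem0 (hamW x) hxn (Nat.even_iff.mp he)
    · have hs : (-1 : ℝ) ^ (hamW x) = -1 := Odd.neg_one_pow ho
      have hpx : p x = f1 x := by
        simp only [hp, hg0, hg1, hs]
        ring
      rw [hpx, hf1]
      exact Q_pos n D hD 1 (le_refl 1) C1 hmem1 (hamW x) hxn (Nat.odd_iff.mp ho)
  · -- vanishing
    intro S h1 h2
    exact hvanish S h1 h2
  · -- counting
    have hsub : {S : Finset (Fin n) | fourierCoef p S ≠ 0} ⊆
        (↑((Finset.univ : Finset (Finset (Fin n))).filter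
          (fun S => S.card ≤ M ∨ n - M ≤ S.card)) : Set (Finset (Fin n))) := by
      intro S hS
      simp only [Set.mem_setOf_eq] at hS
      simp only [Finset.coe_filter, Set.mem_setOf_eq, Finset.mem_univ, true_and]
      by_contra hc
      push_neg at hc
      exact hS (hvanish S (by omega) (by omega))
    calc {S : Finset (Fin n) | fourierCoef p S ≠ 0}.ncard
        ≤ (↑((Finset.univ : Finset (Finset (Fin n))).filter
            (fun S => S.card ≤ M ∨ n - M ≤ S.card)) : Set (Finset (Fin n))).ncard :=
          Set.ncard_le_ncard hsub (Finset.finite_toSet _)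
      _ = ((Finset.univ : Finset (Finset (Fin n))).filter
            (fun S => S.card ≤ M ∨ n - M ≤ S.card)).card := Set.ncard_coe_finset _
      _ ≤ 2 * ∑ k ∈ Finset.range (M + 1), n.choose k := count_le n M
end
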